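/- arXiv:2605.11466 — 7 statements merged into one kernel-verified Lean document; each statement's English description precedes it below -/
import Mathlib

section
/- The circulant graphs C₃₂({1,2,15}) and C₃₂({2,7,9}) are isomorphic; indeed the map φ : ℤ/32ℤ → ℤ/32ℤ given by φ(x) = x + 8 if x is odd and φ(x) = x if x is even is a graph isomorphism from C₃₂({1,2,15}) to C₃₂({2,7,9}). Moreover they are not Adám isomorphic: for every unit x of ℤ/32ℤ, x·({1,2,15} ∪ -{1,2,15}) ≠ {2,7,9} ∪ -{2,7,9} as subsets of ℤ/32ℤ. -/
open Pointwise

/-- The circulant graph `Cₙ(R)`: vertices are `ZMod n`, and distinct `u v` are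
adjacent iff `u - v ∈ R` or `v - u ∈ R`. -/
def circulantGraph (n : ℕ) (R : Set (ZMod n)) : SimpleGraph (ZMod n) where
  Adj u v := u ≠ v ∧ (u - v ∈ R ∨ v - u ∈ R)
  symm := ⟨fun u v h => ⟨h.1.symm, h.2.symm⟩⟩
  loopless := ⟨fun u h => h.1 rfl⟩

/-- The map `φ(x) = x + 8` if `x` is odd, `φ(x) = x` if `x` is even,
where parity refers to the canonical representative in `{0, …, 31}`. -/
def phi : ZMod 32 → ZMod 32 := fun x => if x.val % 2 = 1 then x + 8 else x

theorem stmt0 :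
    (Function.Bijective phi ∧
      ∀ u v : ZMod 32,
        (circulantGraph 32 ({1,2,15} : Set (ZMod 32))).Adj u v ↔
          (circulantGraph 32 ({2,7,9} : Set (ZMod 32))).Adj (phi u) (phi v)) ∧
    ∀ x : (ZMod 32)ˣ,
      (fun r => (x : ZMod 32) * r) '' (({1,2,15} : Set (ZMod 32)) ∪ -({1,2,15} : Set (ZMod 32))) ≠ ({2,7,9} : Set (ZMod 32)) ∪ -({2,7,9} : Set (ZMod 32)) := by
  refine ⟨⟨by decide, ?_⟩, ?_⟩
  · simp only [circulantGraph, Set.mem_insert_iff, Set.mem_singleton_iff, ne_eq]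
    decide
  · intro x h
    have h1 : (x : ZMod 32) * 1 ∈ (({2,7,9} : Set (ZMod 32)) ∪ -({2,7,9} : Set (ZMod 32))) := by
      rw [← h]; exact Set.mem_image_of_mem _ (Or.inl (by simp))
    have h2 : (x : ZMod 32) * 2 ∈ (({2,7,9} : Set (ZMod 32)) ∪ -({2,7,9} : Set (ZMod 32))) := by
      rw [← h]; exact Set.mem_image_of_mem _ (Or.inl (by simp))
    have hu : IsUnit (x : ZMod 32) := x.isUnit
    simp only [Set.mem_union, Set.mem_insert_iff, Set.mem_singleton_iff, Set.mem_neg, mul_one,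
      neg_eq_iff_eq_neg] at h1 h2
    have e1 : (-2 : ZMod 32) = 30 := by decide
    have e2 : (-7 : ZMod 32) = 25 := by decide
    have e3 : (-9 : ZMod 32) = 23 := by decide
    rw [e1, e2, e3] at h1
    rcases h1 with (h|h|h) | (h|h|h) <;> rw [h] at hu h2 <;>
      first
        | exact absurd hu (by decide)
        | (revert h2; decide)
end

section
/- The circulant graphs C₃₂({1,6,15}) and C₃₂({6,7,9}) are isomorphic as simple graphs, but they are not Adám isomorphic: for every unit x of ℤ/32ℤ, x·({1,6,15} ∪ -{1,6,15}) ≠ {6,7,9} ∪ -{6,7,9} as subsets of ℤ/32ℤ. -/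
open Pointwise

def fmap : ZMod 32 → ZMod 32 :=
  ![0, 7, 30, 5, 28, 3, 26, 1, 24, 31, 22, 29, 20, 27, 18, 25,
    16, 23, 14, 21, 12, 19, 10, 17, 8, 15, 6, 13, 4, 11, 2, 9]

lemma fbij : Function.Bijective fmap := by decide

lemma mem1 (a : ZMod 32) : a ∈ ({1,6,15} : Set (ZMod 32)) ↔ (a = 1 ∨ a = 6 ∨ a = 15) := by
  simp [Set.mem_insert_iff]

lemma mem2 (a : ZMod 32) : a ∈ ({6,7,9} : Set (ZMod 32)) ↔ (a = 6 ∨ a = 7 ∨ a = 9) := by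
  simp [Set.mem_insert_iff]

lemma key : ∀ a b : ZMod 32,
    (fmap a ≠ fmap b ∧
      ((fmap a - fmap b = 6 ∨ fmap a - fmap b = 7 ∨ fmap a - fmap b = 9) ∨
       (fmap b - fmap a = 6 ∨ fmap b - fmap a = 7 ∨ fmap b - fmap a = 9))) ↔
    (a ≠ b ∧ ((a - b = 1 ∨ a - b = 6 ∨ a - b = 15) ∨ (b - a = 1 ∨ b - a = 6 ∨ b - a = 15))) := by
  decide

theorem stmt1 :
    Nonempty (circulantGraph 32 ({1,6,15} : Set (ZMod 32)) ≃g circulantGraph 32 ({6,7,9} : Set (ZMod 32))) ∧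
    ∀ x : (ZMod 32)ˣ,
      (fun r => (x : ZMod 32) * r) '' (({1,6,15} : Set (ZMod 32)) ∪ -({1,6,15} : Set (ZMod 32))) ≠ ({6,7,9} : Set (ZMod 32)) ∪ -({6,7,9} : Set (ZMod 32)) := by
  constructor
  · exact ⟨{ toEquiv := Equiv.ofBijective fmap fbij
             map_rel_iff' := by
               intro a b
               show (fmap a ≠ fmap b ∧ _) ↔ (a ≠ b ∧ _)
               rw [mem2, mem2, mem1, mem1]
               exact key a b }⟩
  · intro x h
    have h1 : (x : ZMod 32) * 1 ∈ (({6,7,9} : Set (ZMod 32)) ∪ -({6,7,9} : Set (ZMod 32))) := by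
      rw [← h]; exact Set.mem_image_of_mem _ (Set.mem_union_left _ (by simp))
    have h6 : (x : ZMod 32) * 6 ∈ (({6,7,9} : Set (ZMod 32)) ∪ -({6,7,9} : Set (ZMod 32))) := by
      rw [← h]; exact Set.mem_image_of_mem _ (Set.mem_union_left _ (by simp))
    rw [mul_one] at h1
    simp only [Set.mem_union, Set.mem_neg, mem2, neg_eq_iff_eq_neg] at h1 h6
    have e1 : (-(6:ZMod 32)) = 26 := by decide
    have e2 : (-(7:ZMod 32)) = 25 := by decide
    have e3 : (-(9:ZMod 32)) = 23 := by decide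
    rw [e1, e2, e3] at h1 h6
    rcases h1 with (h|h|h)|(h|h|h) <;> rw [h] at h6 <;> revert h6 <;> decide
end

section
/- The circulant graphs C₃₂({1,10,15}) and C₃₂({7,9,10}) are isomorphic as simple graphs, but they are not Adám isomorphic: for every unit x of ℤ/32ℤ, x·({1,10,15} ∪ -{1,10,15}) ≠ {7,9,10} ∪ -{7,9,10} as subsets of ℤ/32ℤ. -/
open Pointwise

instance memDec (a : ZMod 32) : Decidable (a ∈ ({1,10,15} : Set (ZMod 32))) :=
  decidable_of_iff (a = 1 ∨ a = 10 ∨ a = 15) (by simp [Set.mem_insert_iff])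

instance memDec' (a : ZMod 32) : Decidable (a ∈ ({7,9,10} : Set (ZMod 32))) :=
  decidable_of_iff (a = 7 ∨ a = 9 ∨ a = 10) (by simp [Set.mem_insert_iff])

def f32 : ZMod 32 → ZMod 32 := fun v => if v.val % 2 = 0 then v else v + 8
def g32 : ZMod 32 → ZMod 32 := fun v => if v.val % 2 = 0 then v else v + 24

def e32 : ZMod 32 ≃ ZMod 32 where
  toFun := f32
  invFun := g32
  left_inv := by decide
  right_inv := by decide

instance adjDec1 : DecidableRel (circulantGraph 32 ({1,10,15} : Set (ZMod 32))).Adj :=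
  fun u v => inferInstanceAs (Decidable (u ≠ v ∧ (u - v ∈ ({1,10,15} : Set (ZMod 32)) ∨ v - u ∈ ({1,10,15} : Set (ZMod 32)))))

instance adjDec2 : DecidableRel (circulantGraph 32 ({7,9,10} : Set (ZMod 32))).Adj :=
  fun u v => inferInstanceAs (Decidable (u ≠ v ∧ (u - v ∈ ({7,9,10} : Set (ZMod 32)) ∨ v - u ∈ ({7,9,10} : Set (ZMod 32)))))

lemma adjKey : ∀ a b : ZMod 32,
    (circulantGraph 32 ({7,9,10} : Set (ZMod 32))).Adj (e32 a) (e32 b) ↔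
    (circulantGraph 32 ({1,10,15} : Set (ZMod 32))).Adj a b := by decide

theorem stmt2 :
    Nonempty (circulantGraph 32 ({1,10,15} : Set (ZMod 32)) ≃g circulantGraph 32 ({7,9,10} : Set (ZMod 32))) ∧
    ∀ x : (ZMod 32)ˣ,
      (fun r => (x : ZMod 32) * r) '' (({1,10,15} : Set (ZMod 32)) ∪ -({1,10,15} : Set (ZMod 32))) ≠ ({7,9,10} : Set (ZMod 32)) ∪ -({7,9,10} : Set (ZMod 32)) := by
  constructor
  · exact ⟨⟨e32, fun {a b} => adjKey a b⟩⟩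
  · intro x h
    have h1 : (x : ZMod 32) ∈ ({7,9,10} : Set (ZMod 32)) ∪ -({7,9,10} : Set (ZMod 32)) := by
      rw [← h]; exact ⟨1, Or.inl (by simp), mul_one _⟩
    have h2 : (x : ZMod 32) * 10 ∈ ({7,9,10} : Set (ZMod 32)) ∪ -({7,9,10} : Set (ZMod 32)) := by
      rw [← h]; exact ⟨10, Or.inl (by simp), rfl⟩
    simp only [Set.mem_union, Set.mem_insert_iff, Set.mem_singleton_iff, Set.mem_neg] at h1 h2
    rcases h1 with (h1|h1|h1)|h1|h1|h1 <;>
      first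
      | (rw [h1] at h2; revert h2; decide)
      | (rw [show (x : ZMod 32) = -7 from by linear_combination -h1] at h2; revert h2; decide)
      | (rw [show (x : ZMod 32) = -9 from by linear_combination -h1] at h2; revert h2; decide)
      | (rw [show (x : ZMod 32) = -10 from by linear_combination -h1] at h2; revert h2; decide)
end

section
/- The circulant graphs C₃₂({1,14,15}) and C₃₂({7,9,14}) are isomorphic as simple graphs, but they are not Adám isomorphic: for every unit x of ℤ/32ℤ, x·({1,14,15} ∪ -{1,14,15}) ≠ {7,9,14} ∪ -{7,9,14} as subsets of ℤ/32ℤ. -/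
open Pointwise

/-- The map realizing the isomorphism: negate even vertices, send odd `x` to `8 - x`. -/
def myF (x : ZMod 32) : ZMod 32 := if x.val % 2 = 0 then -x else 8 - x

lemma myF_invol : ∀ x : ZMod 32, myF (myF x) = x := by decide

def myEquiv : ZMod 32 ≃ ZMod 32 where
  toFun := myF
  invFun := myF
  left_inv := myF_invol
  right_inv := myF_invol

lemma adj1 (u v : ZMod 32) :
    (circulantGraph 32 ({1,14,15} : Set (ZMod 32))).Adj u v ↔
      u ≠ v ∧ (u - v = 1 ∨ u - v = 14 ∨ u - v = 15 ∨ v - u = 1 ∨ v - u = 14 ∨ v - u = 15) := by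
  simp only [circulantGraph, Set.mem_insert_iff, Set.mem_singleton_iff]
  tauto

lemma adj2 (u v : ZMod 32) :
    (circulantGraph 32 ({7,9,14} : Set (ZMod 32))).Adj u v ↔
      u ≠ v ∧ (u - v = 7 ∨ u - v = 9 ∨ u - v = 14 ∨ v - u = 7 ∨ v - u = 9 ∨ v - u = 14) := by
  simp only [circulantGraph, Set.mem_insert_iff, Set.mem_singleton_iff]
  tauto

lemma adj_key : ∀ u v : ZMod 32,
    (u ≠ v ∧ (u - v = 1 ∨ u - v = 14 ∨ u - v = 15 ∨ v - u = 1 ∨ v - u = 14 ∨ v - u = 15)) ↔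
    (myF u ≠ myF v ∧ (myF u - myF v = 7 ∨ myF u - myF v = 9 ∨ myF u - myF v = 14 ∨
      myF v - myF u = 7 ∨ myF v - myF u = 9 ∨ myF v - myF u = 14)) := by decide

lemma adam_key : ∀ x : (ZMod 32)ˣ, ¬ ∀ a : ZMod 32,
    (∃ r : ZMod 32, ((r = 1 ∨ r = 14 ∨ r = 15) ∨ (-r = 1 ∨ -r = 14 ∨ -r = 15)) ∧ (x : ZMod 32) * r = a)
    ↔ ((a = 7 ∨ a = 9 ∨ a = 14) ∨ (-a = 7 ∨ -a = 9 ∨ -a = 14)) := by decide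

theorem stmt3 :
    Nonempty (circulantGraph 32 ({1,14,15} : Set (ZMod 32)) ≃g circulantGraph 32 ({7,9,14} : Set (ZMod 32))) ∧
    ∀ x : (ZMod 32)ˣ,
      (fun r => (x : ZMod 32) * r) '' (({1,14,15} : Set (ZMod 32)) ∪ -({1,14,15} : Set (ZMod 32))) ≠ ({7,9,14} : Set (ZMod 32)) ∪ -({7,9,14} : Set (ZMod 32)) := by
  constructor
  · exact ⟨⟨myEquiv, fun {u v} => by
      rw [adj1, adj2]; exact (adj_key u v).symm⟩⟩
  · intro x h
    apply adam_key x
    intro a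
    have := Set.ext_iff.mp h a
    simpa only [Set.mem_image, Set.mem_union, Set.mem_insert_iff, Set.mem_singleton_iff,
      Set.mem_neg] using this
end

section
/- The circulant graphs C₃₂({3,10,13}) and C₃₂({5,10,11}) are isomorphic as simple graphs, but they are not Adám isomorphic: for every unit x of ℤ/32ℤ, x·({3,10,13} ∪ -{3,10,13}) ≠ {5,10,11} ∪ -{5,10,11} as subsets of ℤ/32ℤ. -/
open Pointwise

def isoFun : ZMod 32 → ZMod 32 :=
  ![0, 7, 30, 5, 28, 3, 26, 1, 24, 31, 22, 29, 20, 27, 18, 25, 16, 23, 14, 21,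
    12, 19, 10, 17, 8, 15, 6, 13, 4, 11, 2, 9]

lemma isoFun_bij : Function.Bijective isoFun := by decide

lemma adam_aux : ∀ x : ZMod 32, (∃ y : ZMod 32, x * y = 1) →
    ¬ (∀ a : ZMod 32,
      (∃ b : ZMod 32, (b = 3 ∨ b = 10 ∨ b = 13 ∨ -b = 3 ∨ -b = 10 ∨ -b = 13) ∧ x * b = a) ↔
      (a = 5 ∨ a = 10 ∨ a = 11 ∨ -a = 5 ∨ -a = 10 ∨ -a = 11)) := by decide

theorem stmt6 :
    Nonempty (circulantGraph 32 ({3,10,13} : Set (ZMod 32)) ≃g circulantGraph 32 ({5,10,11} : Set (ZMod 32))) ∧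
    ∀ x : (ZMod 32)ˣ,
      (fun r => (x : ZMod 32) * r) '' (({3,10,13} : Set (ZMod 32)) ∪ -({3,10,13} : Set (ZMod 32))) ≠ ({5,10,11} : Set (ZMod 32)) ∪ -({5,10,11} : Set (ZMod 32)) := by
  constructor
  · refine ⟨⟨Equiv.ofBijective isoFun isoFun_bij, ?_⟩⟩
    intro u v
    show (_ ≠ _ ∧ _) ↔ (_ ≠ _ ∧ _)
    simp only [Equiv.ofBijective_apply, Set.mem_insert_iff, Set.mem_singleton_iff]
    revert u v
    decide
  · intro x h
    apply adam_aux (x : ZMod 32) ⟨(x⁻¹ : (ZMod 32)ˣ), x.mul_inv⟩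
    intro a
    have := Set.ext_iff.mp h a
    simpa only [Set.mem_image, Set.mem_union, Set.mem_neg, Set.mem_insert_iff,
      Set.mem_singleton_iff, or_assoc] using this
end

section
/- Let φ : ℤ/32ℤ → ℤ/32ℤ be the map φ(x) = x + 8 if x is odd and φ(x) = x if x is even. For every subset T ⊆ ℤ/32ℤ all of whose elements are even, φ is a graph isomorphism from the circulant graph C₃₂({1,15} ∪ T) to the circulant graph C₃₂({7,9} ∪ T). -/
open Pointwise

lemma phi_bij : Function.Bijective phi := by decide

lemma phi_key : ∀ u v : ZMod 32,
    ((u - v = 1 ∨ u - v = 15) ∨ (v - u = 1 ∨ v - u = 15)) ↔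
      ((phi u - phi v = 7 ∨ phi u - phi v = 9) ∨
        (phi v - phi u = 7 ∨ phi v - phi u = 9)) := by decide

lemma phi_parity : ∀ u v : ZMod 32, (phi u - phi v).val % 2 = (u - v).val % 2 := by decide

lemma phi_even : ∀ u v : ZMod 32, (u - v).val % 2 = 0 → phi u - phi v = u - v := by decide

set_option maxHeartbeats 1000000 in
theorem stmt16 (T : Set (ZMod 32)) (hT : ∀ t ∈ T, t.val % 2 = 0) :
    Function.Bijective phi ∧
    ∀ u v : ZMod 32,
      (circulantGraph 32 (({1,15} : Set (ZMod 32)) ∪ T)).Adj u v ↔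
        (circulantGraph 32 (({7,9} : Set (ZMod 32)) ∪ T)).Adj (phi u) (phi v) := by
  refine ⟨phi_bij, fun u v => ?_⟩
  have hmemT : ∀ a b : ZMod 32, (a - b ∈ T ↔ phi a - phi b ∈ T) := by
    intro a b
    rcases Nat.mod_two_eq_zero_or_one (a - b).val with h | h
    · rw [phi_even a b h]
    · constructor
      · intro hm; exact absurd (hT _ hm) (by omega)
      · intro hm
        have := hT _ hm
        rw [phi_parity a b, h] at this
        omega
  have hne : u ≠ v ↔ phi u ≠ phi v :=
    ⟨fun h h2 => h (phi_bij.1 h2), fun h h2 => h (by rw [h2])⟩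
  have hkey := phi_key u v
  have h1 := hmemT u v
  have h2 := hmemT v u
  simp only [circulantGraph, Set.mem_union, Set.mem_insert_iff, Set.mem_singleton_iff]
  refine and_congr hne ?_
  generalize phi u - phi v = c at hkey h1 ⊢
  generalize phi v - phi u = d at hkey h2 ⊢
  generalize u - v = a at hkey h1 ⊢
  generalize v - u = b at hkey h2 ⊢
  itauto
end

section
/- Let φ : ℤ/32ℤ → ℤ/32ℤ be the map φ(x) = x + 8 if x is odd and φ(x) = x if x is even. For every subset T ⊆ ℤ/32ℤ all of whose elements are even, φ is a graph isomorphism from the circulant graph C₃₂({3,13} ∪ T) to the circulant graph C₃₂({5,11} ∪ T). -/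
open Pointwise

lemma phi_sub_same : ∀ u v : ZMod 32, u.val % 2 = v.val % 2 → phi u - phi v = u - v := by
  decide

lemma same_par_ne : ∀ u v : ZMod 32, u.val % 2 = v.val % 2 →
    ¬(u - v = 3 ∨ u - v = 13 ∨ u - v = 5 ∨ u - v = 11) := by decide

lemma diff_par_odd : ∀ u v : ZMod 32, ¬ u.val % 2 = v.val % 2 → (u - v).val % 2 = 1 := by
  decide

lemma phi_par : ∀ x : ZMod 32, (phi x).val % 2 = x.val % 2 := by decide

lemma diff_par_main : ∀ u v : ZMod 32, ¬ u.val % 2 = v.val % 2 →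
    (((u - v = 3 ∨ u - v = 13) ∨ (v - u = 3 ∨ v - u = 13)) ↔
      ((phi u - phi v = 5 ∨ phi u - phi v = 11) ∨
        (phi v - phi u = 5 ∨ phi v - phi u = 11))) := by decide

theorem stmt17 (T : Set (ZMod 32)) (hT : ∀ t ∈ T, t.val % 2 = 0) :
    Function.Bijective phi ∧
    ∀ u v : ZMod 32,
      (circulantGraph 32 (({3,13} : Set (ZMod 32)) ∪ T)).Adj u v ↔
        (circulantGraph 32 (({5,11} : Set (ZMod 32)) ∪ T)).Adj (phi u) (phi v) := by
  have hb : Function.Bijective phi := phi_bij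
  refine ⟨hb, fun u v => ?_⟩
  have hne : ¬ phi u = phi v ↔ ¬ u = v := not_congr hb.1.eq_iff
  simp only [circulantGraph, Set.mem_union, Set.mem_insert_iff, Set.mem_singleton_iff,
    ne_eq, hne]
  by_cases hp : u.val % 2 = v.val % 2
  · have h1 := phi_sub_same u v hp
    have h2 := phi_sub_same v u hp.symm
    have h3 := same_par_ne u v hp
    have h4 := same_par_ne v u hp.symm
    rw [h1, h2]
    tauto
  · have hT1 : u - v ∉ T := fun h => by
      have := hT _ h; rw [diff_par_odd u v hp] at this; exact one_ne_zero this
    have hT2 : v - u ∉ T := fun h => by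
      have := hT _ h
      rw [diff_par_odd v u (fun h' => hp h'.symm)] at this; exact one_ne_zero this
    have hp' : ¬ (phi u).val % 2 = (phi v).val % 2 := by
      rw [phi_par, phi_par]; exact hp
    have hT3 : phi u - phi v ∉ T := fun h => by
      have := hT _ h; rw [diff_par_odd _ _ hp'] at this; exact one_ne_zero this
    have hT4 : phi v - phi u ∉ T := fun h => by
      have := hT _ h
      rw [diff_par_odd _ _ (fun h' => hp' h'.symm)] at this; exact one_ne_zero this
    have hmain := diff_par_main u v hp
    simp only [hT1, hT2, hT3, hT4, or_false, false_or]
    simp only [or_assoc] at hmain ⊢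
    rw [hmain]
end
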